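/- arXiv:1903.00202 — 2 statements merged into one kernel-verified Lean document; each statement's English description precedes it below -/
import Mathlib

section
/- Let G be a countable group and H a strongly self-commensurating subgroup with Kazhdan's property (T). Then H has the spectral gap property: the representation of H on ℓ²(G/H ∖ {H}) does not weakly contain 1_H. -/
open scoped Classical ENNReal
open Topology Filter

noncomputable section

namespace QR

/-- The evaluation of a unitary representation on an element of the group algebra `ℂ[G]`. -/
def repAlg {G : Type*} [Group G] {E : Type*} [NormedAddCommGroup E] [NormedSpace ℂ E]
    (π : G →* (E →L[ℂ] E)) (f : MonoidAlgebra ℂ G) : E →L[ℂ] E :=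
  MonoidAlgebra.lift ℂ (E →L[ℂ] E) G π f

/-- Weak containment `ρ ≺ π` of representations: `‖ρ(f)‖ ≤ ‖π(f)‖` for every element `f` of
the group algebra `ℂ[G]`. -/
def WeaklyContained {G : Type*} [Group G] {E F : Type*}
    [NormedAddCommGroup E] [NormedSpace ℂ E] [NormedAddCommGroup F] [NormedSpace ℂ F]
    (ρ : G →* (E →L[ℂ] E)) (π : G →* (F →L[ℂ] F)) : Prop :=
  ∀ f : MonoidAlgebra ℂ G, ‖repAlg ρ f‖ ≤ ‖repAlg π f‖

/-- The trivial (one-dimensional) representation `1_G`. -/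
def trivialRep (G : Type*) [Group G] : G →* (ℂ →L[ℂ] ℂ) := 1

section lp

variable {X K : Type*} [NormedAddCommGroup K] [InnerProductSpace ℂ K]

lemma memTwist (e : X ≃ X) (U : X → (K ≃ₗᵢ[ℂ] K)) (F : lp (fun _ : X => K) 2) :
    Memℓp (fun x => U x (F (e.symm x))) 2 := by
  apply memℓp_gen
  have hs : Summable fun x : X => ‖F x‖ ^ (2 : ℝ≥0∞).toReal :=
    (lp.memℓp F).summable (by norm_num)
  have : Summable fun x : X => ‖F (e.symm x)‖ ^ (2 : ℝ≥0∞).toReal :=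
    (e.symm.summable_iff (f := fun x : X => ‖F x‖ ^ (2 : ℝ≥0∞).toReal)).2 hs
  simpa [LinearIsometryEquiv.norm_map] using this

/-- The twisted translation operator on `ℓ²(X, K)`. -/
def twistOp (e : X ≃ X) (U : X → (K ≃ₗᵢ[ℂ] K)) :
    lp (fun _ : X => K) 2 →L[ℂ] lp (fun _ : X => K) 2 :=
  LinearMap.mkContinuous
    { toFun := fun F => ⟨fun x => U x (F (e.symm x)), memTwist e U F⟩
      map_add' := by
        intro F G'
        apply lp.ext
        funext x
        simp [lp.coeFn_add, Pi.add_apply]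
        rfl
      map_smul' := by
        intro c F
        apply lp.ext
        funext x
        simp [lp.coeFn_smul, Pi.smul_apply] }
    1
    (by
      intro F
      have h2 : (0:ℝ) < (2 : ℝ≥0∞).toReal := by norm_num
      rw [one_mul]
      apply le_of_eq
      rw [lp.norm_eq_tsum_rpow h2, lp.norm_eq_tsum_rpow h2]
      congr 1
      have := (e.symm).tsum_eq (f := fun x : X => ‖F x‖ ^ (2 : ℝ≥0∞).toReal)
      simpa [LinearIsometryEquiv.norm_map] using this)

@[simp] lemma twistOp_apply (e : X ≃ X) (U : X → (K ≃ₗᵢ[ℂ] K))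
    (F : lp (fun _ : X => K) 2) (x : X) :
    (twistOp e U F : ∀ _ : X, K) x = U x (F (e.symm x)) := rfl

end lp

/-- The permutation (unitary) representation of `Γ` on `ℓ²(X)` attached to an action of `Γ`
on the set `X`, given by `(π(g)F)(x) = F(g⁻¹ • x)`. -/
def permRep (Γ X : Type*) [Group Γ] [MulAction Γ X] :
    Γ →* (lp (fun _ : X => ℂ) 2 →L[ℂ] lp (fun _ : X => ℂ) 2) where
  toFun g := twistOp (MulAction.toPerm g) (fun _ => LinearIsometryEquiv.refl ℂ ℂ)
  map_one' := by
    apply ContinuousLinearMap.ext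
    intro F
    apply lp.ext
    funext x
    simp
  map_mul' := by
    intro g g'
    apply ContinuousLinearMap.ext
    intro F
    apply lp.ext
    funext x
    simp [mul_smul]

/-- The left regular representation `λ_G` of `G` on `ℓ²(G)`. -/
def regularRep (G : Type*) [Group G] :
    G →* (lp (fun _ : G => ℂ) 2 →L[ℂ] lp (fun _ : G => ℂ) 2) :=
  permRep G G

/-- The quasi-regular representation `λ_{G/H}` of `G` on `ℓ²(G/H)`. -/
def quasiRegRep (G : Type*) [Group G] (H : Subgroup G) :
    G →* (lp (fun _ : G ⧸ H => ℂ) 2 →L[ℂ] lp (fun _ : G ⧸ H => ℂ) 2) :=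
  permRep G (G ⧸ H)

/-- The embedding of `Sub(G)` into `{0,1}^G` by characteristic functions. -/
def chabautyEmbed (G : Type*) [Group G] : Subgroup G → (G → Bool) :=
  fun H g => decide (g ∈ H)

/-- The Chabauty topology on the space of subgroups of a discrete group `G`: the topology
induced from the product topology on `{0,1}^G` via characteristic functions. -/
def chabautyTopology (G : Type*) [Group G] : TopologicalSpace (Subgroup G) :=
  TopologicalSpace.induced (chabautyEmbed G) inferInstance

/-- The conjugate subgroup `gHg⁻¹`. -/
def conjSubgroup {G : Type*} [Group G] (g : G) (H : Subgroup G) : Subgroup G :=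
  Subgroup.map (MulAut.conj g).toMonoidHom H

/-- The conjugacy class of a subgroup, as a subset of `Sub(G)`. -/
def conjClass {G : Type*} [Group G] (H : Subgroup G) : Set (Subgroup G) :=
  {K | ∃ g : G, conjSubgroup g H = K}

section SpectralGap

variable {G : Type*} [Group G]

lemma base_fixed {H : Subgroup G} (h : H) :
    (h : G) • ((1 : G) : G ⧸ H) = ((1 : G) : G ⧸ H) := by
  rw [MulAction.Quotient.smul_mk, smul_eq_mul, mul_one]
  exact QuotientGroup.eq.mpr (by simp [H.inv_mem h.2])

/-- The action of `H` on `G/H ∖ {H}`. -/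
instance sgAction (G : Type*) [Group G] (H : Subgroup G) :
    MulAction H {q : G ⧸ H // q ≠ ((1 : G) : G ⧸ H)} where
  smul h q := ⟨(h : G) • q.1, fun hEq => q.2 (by
    calc q.1 = (h : G)⁻¹ • ((h : G) • q.1) := (inv_smul_smul _ _).symm
      _ = ((h⁻¹ : H) : G) • (((1 : G) : G ⧸ H)) := by rw [hEq]; rfl
      _ = ((1 : G) : G ⧸ H) := base_fixed _)⟩
  one_smul q := by
    apply Subtype.ext
    show ((1 : H) : G) • q.1 = q.1
    simp
  mul_smul h h' q := by
    apply Subtype.ext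
    show ((h * h' : H) : G) • q.1 = (h : G) • ((h' : G) • q.1)
    rw [MulMemClass.coe_mul, mul_smul]

/-- The natural representation of `H` on `ℓ²(G/H ∖ {H})`. -/
def sgRep (G : Type*) [Group G] (H : Subgroup G) :
    H →* (lp (fun _ : {q : G ⧸ H // q ≠ ((1 : G) : G ⧸ H)} => ℂ) 2 →L[ℂ]
      lp (fun _ : {q : G ⧸ H // q ≠ ((1 : G) : G ⧸ H)} => ℂ) 2) :=
  permRep H {q : G ⧸ H // q ≠ ((1 : G) : G ⧸ H)}

/-- `H ≤ G` has the spectral gap property if `1_H` is not weakly contained in the natural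
representation of `H` on `ℓ²(G/H ∖ {H})`. -/
def HasSpectralGap (G : Type*) [Group G] (H : Subgroup G) : Prop :=
  ¬ WeaklyContained (trivialRep H) (sgRep G H)

end SpectralGap

universe uT

/-- Kazhdan's property (T): every unitary representation with almost invariant vectors has
a nonzero invariant vector. -/
def HasPropertyT (Γ : Type*) [Group Γ] : Prop :=
  ∀ (E : Type uT) [NormedAddCommGroup E] [InnerProductSpace ℂ E] [CompleteSpace E]
    (π : Γ →* (E →L[ℂ] E)), (∀ (g : Γ) (v : E), ‖π g v‖ = ‖v‖) →
    (∀ (F : Finset Γ) (ε : ℝ), 0 < ε →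
      ∃ v : E, ‖v‖ = 1 ∧ ∀ g ∈ F, ‖π g v - v‖ < ε) →
    ∃ v : E, v ≠ 0 ∧ ∀ g : Γ, π g v = v

/-! ### Auxiliary lemmas -/

section AuxPerm

variable {Γ X : Type*} [Group Γ] [MulAction Γ X]

lemma permRep_apply (g : Γ) (F : lp (fun _ : X => ℂ) 2) (x : X) :
    (permRep Γ X g F : ∀ _ : X, ℂ) x = F (g⁻¹ • x) := rfl

lemma permRep_norm (g : Γ) (F : lp (fun _ : X => ℂ) 2) :
    ‖permRep Γ X g F‖ = ‖F‖ := by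
  have h2 : (0 : ℝ) < (2 : ℝ≥0∞).toReal := by norm_num
  rw [lp.norm_eq_tsum_rpow h2, lp.norm_eq_tsum_rpow h2]
  congr 1
  exact (MulAction.toPerm g).symm.tsum_eq (f := fun x : X => ‖F x‖ ^ (2 : ℝ≥0∞).toReal)

end AuxPerm

section AuxRepAlg

variable {G : Type*} [Group G] {E : Type*} [NormedAddCommGroup E] [NormedSpace ℂ E]

lemma repAlg_single (π : G →* (E →L[ℂ] E)) (g : G) (c : ℂ) :
    repAlg π (MonoidAlgebra.single g c) = c • π g := by
  simp [repAlg]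

lemma repAlg_sum_single (π : G →* (E →L[ℂ] E)) (F : Finset G) :
    repAlg π (∑ g ∈ F, MonoidAlgebra.single g (1 : ℂ)) = ∑ g ∈ F, π g := by
  have : repAlg π (∑ g ∈ F, MonoidAlgebra.single g (1 : ℂ))
      = ∑ g ∈ F, repAlg π (MonoidAlgebra.single g (1 : ℂ)) :=
    map_sum (MonoidAlgebra.lift ℂ (E →L[ℂ] E) G π) _ F
  rw [this]
  refine Finset.sum_congr rfl fun g _ => ?_
  rw [repAlg_single, one_smul]

lemma norm_repAlg_trivial (Γ : Type*) [Group Γ] (F : Finset Γ) :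
    ‖repAlg (trivialRep Γ) (∑ g ∈ F, MonoidAlgebra.single g (1 : ℂ))‖ = F.card := by
  rw [repAlg_sum_single]
  have : ∀ g ∈ F, trivialRep Γ g = (1 : ℂ →L[ℂ] ℂ) := fun g _ => rfl
  rw [Finset.sum_congr rfl this, Finset.sum_const, ← Nat.cast_smul_eq_nsmul ℂ, norm_smul]
  simp [ContinuousLinearMap.one_def, ContinuousLinearMap.norm_id]

end AuxRepAlg

section AuxCongr

variable {X Y : Type*}

lemma memCongr (e : X ≃ Y) (F : lp (fun _ : X => ℂ) 2) :
    Memℓp (fun y => F (e.symm y)) 2 := by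
  apply memℓp_gen
  have hs : Summable fun x : X => ‖F x‖ ^ (2 : ℝ≥0∞).toReal :=
    (lp.memℓp F).summable (by norm_num)
  exact (e.symm.summable_iff (f := fun x : X => ‖F x‖ ^ (2 : ℝ≥0∞).toReal)).2 hs

/-- The reindexing linear map on `ℓ²`. -/
def lpCongrL (e : X ≃ Y) : lp (fun _ : X => ℂ) 2 →ₗ[ℂ] lp (fun _ : Y => ℂ) 2 where
  toFun F := ⟨fun y => F (e.symm y), memCongr e F⟩
  map_add' F G := by
    apply lp.ext
    funext y
    simp [lp.coeFn_add, Pi.add_apply]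
    rfl
  map_smul' c F := by
    apply lp.ext
    funext y
    simp [lp.coeFn_smul, Pi.smul_apply]

@[simp] lemma lpCongrL_apply (e : X ≃ Y) (F : lp (fun _ : X => ℂ) 2) (y : Y) :
    (lpCongrL e F : ∀ _ : Y, ℂ) y = F (e.symm y) := rfl

/-- The reindexing isometric isomorphism on `ℓ²`. -/
def lpCongr (e : X ≃ Y) : lp (fun _ : X => ℂ) 2 ≃ₗᵢ[ℂ] lp (fun _ : Y => ℂ) 2 where
  toLinearEquiv := LinearEquiv.ofLinear (lpCongrL e) (lpCongrL e.symm)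
    (by
      apply LinearMap.ext
      intro F
      apply lp.ext
      funext y
      simp)
    (by
      apply LinearMap.ext
      intro F
      apply lp.ext
      funext x
      simp)
  norm_map' F := by
    have h2 : (0 : ℝ) < (2 : ℝ≥0∞).toReal := by norm_num
    show ‖lpCongrL e F‖ = ‖F‖
    rw [lp.norm_eq_tsum_rpow h2, lp.norm_eq_tsum_rpow h2]
    congr 1
    exact e.symm.tsum_eq (f := fun x : X => ‖F x‖ ^ (2 : ℝ≥0∞).toReal)

/-- Conjugating a representation by an isometric isomorphism. -/
def congRep {Γ : Type*} [Group Γ] {E E' : Type*} [NormedAddCommGroup E] [NormedSpace ℂ E]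
    [NormedAddCommGroup E'] [NormedSpace ℂ E'] (Φ : E' ≃ₗᵢ[ℂ] E) (π : Γ →* (E →L[ℂ] E)) :
    Γ →* (E' →L[ℂ] E') where
  toFun g := (Φ.symm.toLinearIsometry.toContinuousLinearMap).comp
      ((π g).comp Φ.toLinearIsometry.toContinuousLinearMap)
  map_one' := by
    ext v
    simp
  map_mul' g h := by
    ext v
    simp [ContinuousLinearMap.mul_apply]

@[simp] lemma congRep_apply {Γ : Type*} [Group Γ] {E E' : Type*} [NormedAddCommGroup E]
    [NormedSpace ℂ E] [NormedAddCommGroup E'] [NormedSpace ℂ E'] (Φ : E' ≃ₗᵢ[ℂ] E)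
    (π : Γ →* (E →L[ℂ] E)) (g : Γ) (v : E') :
    congRep Φ π g v = Φ.symm (π g (Φ v)) := rfl

end AuxCongr

section Main

set_option maxHeartbeats 1000000 in
theorem spectral_gap_aux.{u, v} {G : Type u} [Group G] [Countable G] (H : Subgroup G)
    (hT : HasPropertyT.{v} H)
    (hssc : ∀ g : G, g ∉ H → Subgroup.relIndex (conjSubgroup g H) H = 0) :
    HasSpectralGap G H := by
  intro hw
  set X := {q : G ⧸ H // q ≠ ((1 : G) : G ⧸ H)} with hX
  let π := sgRep G H
  have hπnorm : ∀ (g : H) (F : lp (fun _ : X => ℂ) 2), ‖π g F‖ = ‖F‖ :=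
    fun g F => permRep_norm g F
  -- transport to universe `v`
  haveI : Countable (G ⧸ H) := Quotient.countable
  haveI : Countable X := Subtype.countable
  obtain ⟨f, hf⟩ := Countable.exists_injective_nat X
  let e : X ≃ ULift.{v} (Set.range f) := (Equiv.ofInjective f hf).trans Equiv.ulift.symm
  let Φ : lp (fun _ : ULift.{v} (Set.range f) => ℂ) 2 ≃ₗᵢ[ℂ] lp (fun _ : X => ℂ) 2 :=
    lpCongr e.symm
  let π' := congRep Φ π
  have hu : ∀ (g : H) (w : lp (fun _ : ULift.{v} (Set.range f) => ℂ) 2), ‖π' g w‖ = ‖w‖ := by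
    intro g w
    show ‖Φ.symm (π g (Φ w))‖ = ‖w‖
    rw [LinearIsometryEquiv.norm_map, hπnorm, LinearIsometryEquiv.norm_map]
  -- almost invariant vectors
  have hai : ∀ (F : Finset H) (ε : ℝ), 0 < ε →
      ∃ w, ‖w‖ = 1 ∧ ∀ g ∈ F, ‖π' g w - w‖ < ε := by
    intro F ε hε
    classical
    set F' : Finset H := insert 1 F with hF'
    set n : ℕ := F'.card with hn
    have h1F : (1 : H) ∈ F' := Finset.mem_insert_self 1 F
    have hn1 : 1 ≤ n := Finset.card_pos.mpr ⟨1, h1F⟩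
    have hn1R : (1 : ℝ) ≤ (n : ℝ) := by exact_mod_cast hn1
    set δ : ℝ := min 1 (ε ^ 2 / 8) with hδdef
    have hδpos : 0 < δ := lt_min one_pos (by positivity)
    have hδ1 : δ ≤ 1 := min_le_left _ _
    have hδε : δ ≤ ε ^ 2 / 8 := min_le_right _ _
    set T : lp (fun _ : X => ℂ) 2 →L[ℂ] lp (fun _ : X => ℂ) 2 := ∑ g ∈ F', π g with hTdef
    have hTnorm : (n : ℝ) ≤ ‖T‖ := by
      have h1 := hw (∑ g ∈ F', MonoidAlgebra.single g (1 : ℂ))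
      rwa [norm_repAlg_trivial, repAlg_sum_single] at h1
    obtain ⟨w, hw1, hw2⟩ := T.exists_lt_apply_of_lt_opNorm (r := (n : ℝ) - δ)
      (by linarith)
    have hw0 : w ≠ 0 := by
      rintro rfl
      rw [map_zero, norm_zero] at hw2
      linarith
    have hwpos : 0 < ‖w‖ := norm_pos_iff.mpr hw0
    set u : lp (fun _ : X => ℂ) 2 := (‖w‖⁻¹ : ℂ) • w with hudef
    have hun : ‖u‖ = 1 := norm_smul_inv_norm hw0
    have hTu : (n : ℝ) - δ < ‖T u‖ := by
      have hTu' : ‖T u‖ = ‖w‖⁻¹ * ‖T w‖ := by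
        rw [hudef, map_smul, norm_smul]
        congr 1
        simp
      have hinv1 : (1 : ℝ) ≤ ‖w‖⁻¹ := (one_le_inv₀ hwpos).mpr hw1.le
      have : ‖T w‖ ≤ ‖T u‖ := by
        rw [hTu']
        exact le_mul_of_one_le_left (norm_nonneg _) hinv1
      linarith
    have hπ1 : π (1 : H) u = u := by rw [map_one, ContinuousLinearMap.one_apply]
    have key : ∀ g ∈ F', ‖π g u - u‖ < ε := by
      intro g hgF'
      by_cases hg1 : g = 1
      · subst hg1
        rw [hπ1, sub_self, norm_zero]
        exact hε
      · have h1mem : (1 : H) ∈ F'.erase g :=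
          Finset.mem_erase.mpr ⟨fun h => hg1 h.symm, h1F⟩
        set R : Finset H := (F'.erase g).erase 1 with hR
        have hn2 : 2 ≤ n := Finset.one_lt_card.mpr ⟨g, hgF', 1, h1F, hg1⟩
        have hRcard : (R.card : ℝ) = (n : ℝ) - 2 := by
          have h1 : R.card = n - 2 := by
            rw [hR, Finset.card_erase_of_mem h1mem, Finset.card_erase_of_mem hgF']
            omega
          rw [h1]
          have : ((n - 2 : ℕ) : ℝ) = (n : ℝ) - 2 := by
            push_cast [Nat.cast_sub hn2]
            ring
          rw [this]
        have hsplit : T u = (π g u + π 1 u) + ∑ h ∈ R, π h u := by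
          rw [hTdef, ContinuousLinearMap.sum_apply,
            ← Finset.add_sum_erase _ _ hgF', ← Finset.add_sum_erase _ _ h1mem, ← hR, add_assoc]
        have hrest : ‖∑ h ∈ R, π h u‖ ≤ (n : ℝ) - 2 := by
          calc ‖∑ h ∈ R, π h u‖ ≤ ∑ h ∈ R, ‖π h u‖ := norm_sum_le _ _
            _ = ∑ h ∈ R, 1 := by
                refine Finset.sum_congr rfl fun h _ => ?_
                rw [hπnorm, hun]
            _ = (R.card : ℝ) := by rw [Finset.sum_const, nsmul_eq_mul, mul_one]
            _ = (n : ℝ) - 2 := hRcard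
        have htri : ‖T u‖ ≤ ‖π g u + π 1 u‖ + ‖∑ h ∈ R, π h u‖ := by
          rw [hsplit]; exact norm_add_le _ _
        have hsum2 : (2 : ℝ) - δ ≤ ‖π g u + u‖ := by
          rw [hπ1] at htri
          linarith
        have hpar := parallelogram_law_with_norm ℂ (π g u) u
        have hnormg : ‖π g u‖ = 1 := by rw [hπnorm, hun]
        have h2δ : (0 : ℝ) ≤ 2 - δ := by linarith
        have hsq : (2 - δ) * (2 - δ) ≤ ‖π g u + u‖ * ‖π g u + u‖ :=
          mul_self_le_mul_self h2δ hsum2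
        have hlt : ‖π g u - u‖ ^ 2 < ε ^ 2 := by
          nlinarith [hpar, hnormg, hun, hsq, hδpos, hε]
        exact lt_of_pow_lt_pow_left₀ 2 hε.le hlt
    refine ⟨Φ.symm u, ?_, ?_⟩
    · rw [LinearIsometryEquiv.norm_map, hun]
    · intro g hg
      have hπ'g : π' g (Φ.symm u) = Φ.symm (π g u) := by
        rw [congRep_apply, LinearIsometryEquiv.apply_symm_apply]
      rw [hπ'g, ← map_sub, LinearIsometryEquiv.norm_map]
      exact key g (Finset.mem_insert_of_mem hg)
  -- apply property (T)
  obtain ⟨v', hv'0, hv'⟩ := hT (lp (fun _ : ULift.{v} (Set.range f) => ℂ) 2) π' hu hai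
  set vv : lp (fun _ : X => ℂ) 2 := Φ v' with hvv
  have hvne : vv ≠ 0 := by
    intro h
    exact hv'0 (Φ.injective (by rw [← hvv, h, map_zero]))
  have hvinv : ∀ h : H, π h vv = vv := by
    intro h
    have h2 : Φ.symm (π h (Φ v')) = v' := hv' h
    have h3 := congrArg Φ h2
    rwa [LinearIsometryEquiv.apply_symm_apply, ← hvv] at h3
  obtain ⟨x, hx⟩ : ∃ x : X, (vv : ∀ _ : X, ℂ) x ≠ 0 := by
    by_contra hc
    push_neg at hc
    apply hvne
    apply lp.ext
    funext y
    simpa using hc y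
  have hconst : ∀ h : H, (vv : ∀ _ : X, ℂ) (h • x) = (vv : ∀ _ : X, ℂ) x := by
    intro h
    have h2 : (π h⁻¹ vv : ∀ _ : X, ℂ) x = (vv : ∀ _ : X, ℂ) x := by rw [hvinv]
    have h3 : (π h⁻¹ vv : ∀ _ : X, ℂ) x = (vv : ∀ _ : X, ℂ) ((h⁻¹)⁻¹ • x) :=
      permRep_apply h⁻¹ vv x
    rw [inv_inv] at h3
    exact h3.symm.trans h2
  -- the orbit of x is infinite
  obtain ⟨s, hs⟩ := QuotientGroup.mk_surjective x.1
  have hsH : s ∉ H := by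
    intro hsmem
    apply x.2
    rw [← hs]
    exact QuotientGroup.eq.mpr (by simpa using H.inv_mem hsmem)
  have hidx : ((conjSubgroup s H).subgroupOf H).index = 0 := hssc s hsH
  haveI hKinf : Infinite (H ⧸ (conjSubgroup s H).subgroupOf H) :=
    Subgroup.index_eq_zero_iff_infinite.mp hidx
  have hstab : MulAction.stabilizer H x ≤ (conjSubgroup s H).subgroupOf H := by
    intro h hh
    rw [Subgroup.mem_subgroupOf]
    rw [MulAction.mem_stabilizer_iff] at hh
    have h1 : (h : G) • x.1 = x.1 := congrArg Subtype.val hh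
    rw [← hs, MulAction.Quotient.smul_mk, smul_eq_mul] at h1
    have h2 : ((h : G) * s)⁻¹ * s ∈ H := QuotientGroup.eq.mp h1
    rw [conjSubgroup, Subgroup.mem_map]
    refine ⟨s⁻¹ * (h : G) * s, ?_, ?_⟩
    · have heq : s⁻¹ * (h : G) * s = (((h : G) * s)⁻¹ * s)⁻¹ := by group
      rw [heq]
      exact H.inv_mem h2
    · show s * (s⁻¹ * (h : G) * s) * s⁻¹ = (h : G)
      group
  haveI hstabInf : Infinite (H ⧸ MulAction.stabilizer H x) := by
    apply Subgroup.index_eq_zero_iff_infinite.mp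
    exact zero_dvd_iff.mp (hidx ▸ Subgroup.index_dvd_of_le hstab)
  have horbInf : Set.Infinite (MulAction.orbit H x) := by
    rw [Set.infinite_coe_iff.symm] at *
    exact (MulAction.orbitEquivQuotientStabilizer H x).infinite_iff.mpr hstabInf
  -- but the orbit must be finite, contradiction
  have hr2 : (0 : ℝ) < (2 : ℝ≥0∞).toReal := by norm_num
  have hsum : Summable (fun y : X => ‖(vv : ∀ _ : X, ℂ) y‖ ^ (2 : ℝ≥0∞).toReal) :=
    (lp.memℓp vv).summable hr2
  have hcpos : 0 < ‖(vv : ∀ _ : X, ℂ) x‖ ^ (2 : ℝ≥0∞).toReal :=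
    Real.rpow_pos_of_pos (norm_pos_iff.mpr hx) _
  have hev : ∀ᶠ y in Filter.cofinite,
      ‖(vv : ∀ _ : X, ℂ) y‖ ^ (2 : ℝ≥0∞).toReal < ‖(vv : ∀ _ : X, ℂ) x‖ ^ (2 : ℝ≥0∞).toReal :=
    hsum.tendsto_cofinite_zero.eventually_lt_const hcpos
  have hfin : {y : X | ¬ (‖(vv : ∀ _ : X, ℂ) y‖ ^ (2 : ℝ≥0∞).toReal <
      ‖(vv : ∀ _ : X, ℂ) x‖ ^ (2 : ℝ≥0∞).toReal)}.Finite :=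
    Filter.eventually_cofinite.mp hev
  apply horbInf
  apply Set.Finite.subset hfin
  rintro y ⟨h, rfl⟩
  simp only [Set.mem_setOf_eq, not_lt]
  rw [hconst h]

end Main
/-- A strongly self-commensurating subgroup with Kazhdan's property (T) has
the spectral gap property. -/
theorem spectral_gap_of_propertyT (G : Type*) [Group G] [Countable G] (H : Subgroup G)
    (hT : HasPropertyT H)
    (hssc : ∀ g : G, g ∉ H → Subgroup.relIndex (conjSubgroup g H) H = 0) :
    HasSpectralGap G H := by
  exact spectral_gap_aux H hT hssc

end QR
end
end

section
/- Let G be a countable group. The set of a-normal subgroups of G is a closed, G-invariant (under conjugation) subset of Sub(G) with the Chabauty topology. -/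
open scoped Classical ENNReal
open Topology Filter

noncomputable section

namespace QR

/-- Amenability of a (discrete) group, via the Hulanicki–Reiter characterization: the
trivial representation is weakly contained in the left regular representation. -/
def IsAmenable (G : Type*) [Group G] : Prop :=
  WeaklyContained (trivialRep G) (regularRep G)

/-! ### Auxiliary lemmas -/

section Aux

lemma repAlg_apply_coord {Γ : Type*} [Group Γ] (f : MonoidAlgebra ℂ Γ)
    (η : lp (fun _ : Γ => ℂ) 2) (x : Γ) :
    (repAlg (regularRep Γ) f η : ∀ _ : Γ, ℂ) x = f.coeff.sum fun g c => c * η (g⁻¹ * x) := by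
  rw [repAlg, MonoidAlgebra.lift_apply]
  simp only [Finsupp.sum, ContinuousLinearMap.sum_apply, lp.coeFn_sum, Finset.sum_apply]
  refine Finset.sum_congr rfl fun g _ => ?_
  rw [ContinuousLinearMap.smul_apply, lp.coeFn_smul, Pi.smul_apply, smul_eq_mul]
  rfl

variable {L K : Type*} [Group L] [Group K]

/-- The partition of `K` into right cosets of `φ(L)`. -/
def cosetSetoid (φ : L →* K) : Setoid K where
  r x y := ∃ l : L, φ l * x = y
  iseqv := by
    refine ⟨fun x => ⟨1, by simp⟩, ?_, ?_⟩
    · rintro x y ⟨l, rfl⟩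
      exact ⟨l⁻¹, by simp⟩
    · rintro x y z ⟨l, rfl⟩ ⟨m, rfl⟩
      exact ⟨m * l, by rw [map_mul, mul_assoc]⟩

/-- The parametrization of `K` by (coset, element of `L`). -/
def cosetEquiv (φ : L →* K) (hφ : Function.Injective φ) :
    (Quotient (cosetSetoid φ)) × L ≃ K :=
  Equiv.ofBijective (fun p => φ p.2 * p.1.out) <| by
    constructor
    · rintro ⟨q, l⟩ ⟨q', l'⟩ h
      simp only at h
      have hq : q = q' := by
        have hr : (cosetSetoid φ) q.out q'.out :=
          ⟨l'⁻¹ * l, by rw [map_mul, mul_assoc, h, map_inv, inv_mul_cancel_left]⟩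
        calc q = ⟦q.out⟧ := (Quotient.out_eq q).symm
          _ = ⟦q'.out⟧ := Quotient.sound hr
          _ = q' := Quotient.out_eq q'
      subst hq
      have hl : l = l' := hφ (mul_right_cancel h)
      rw [hl]
    · intro x
      obtain ⟨l, hl⟩ := Quotient.mk_out (s := cosetSetoid φ) x
      exact ⟨(⟦x⟧, l), hl⟩

lemma summable_coord (φ : L →* K) (hφ : Function.Injective φ)
    (ζ : lp (fun _ : K => ℂ) 2) :
    Summable fun p : Quotient (cosetSetoid φ) × L =>
      ‖ζ (cosetEquiv φ hφ p)‖ ^ (2 : ℝ≥0∞).toReal :=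
  ((cosetEquiv φ hφ).summable_iff
    (f := fun x : K => ‖ζ x‖ ^ (2 : ℝ≥0∞).toReal)).2
    ((lp.memℓp ζ).summable (by norm_num))

/-- The restriction of `ζ : ℓ²(K)` to the coset `q`, viewed in `ℓ²(L)`. -/
def slice (φ : L →* K) (hφ : Function.Injective φ) (ζ : lp (fun _ : K => ℂ) 2)
    (q : Quotient (cosetSetoid φ)) : lp (fun _ : L => ℂ) 2 :=
  ⟨fun l => ζ (cosetEquiv φ hφ (q, l)),
    memℓp_gen ((summable_coord φ hφ ζ).prod_factor q)⟩

lemma slice_norm_hasSum (φ : L →* K) (hφ : Function.Injective φ)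
    (ζ : lp (fun _ : K => ℂ) 2) (q : Quotient (cosetSetoid φ)) :
    HasSum (fun l : L => ‖ζ (cosetEquiv φ hφ (q, l))‖ ^ (2 : ℝ≥0∞).toReal)
      (‖slice φ hφ ζ q‖ ^ (2 : ℝ≥0∞).toReal) := by
  rw [lp.norm_rpow_eq_tsum (by norm_num) (slice φ hφ ζ q)]
  exact ((summable_coord φ hφ ζ).prod_factor q).hasSum

lemma summable_slice_norm (φ : L →* K) (hφ : Function.Injective φ)
    (ζ : lp (fun _ : K => ℂ) 2) :
    Summable fun q => ‖slice φ hφ ζ q‖ ^ (2 : ℝ≥0∞).toReal :=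
  ((summable_coord φ hφ ζ).hasSum.prod_fiberwise
    fun q => slice_norm_hasSum φ hφ ζ q).summable

lemma norm_decomp (φ : L →* K) (hφ : Function.Injective φ)
    (ζ : lp (fun _ : K => ℂ) 2) :
    ‖ζ‖ ^ (2 : ℝ≥0∞).toReal
      = ∑' q, ‖slice φ hφ ζ q‖ ^ (2 : ℝ≥0∞).toReal := by
  rw [lp.norm_rpow_eq_tsum (by norm_num) ζ,
    ← Equiv.tsum_eq (cosetEquiv φ hφ) (fun x => ‖ζ x‖ ^ (2 : ℝ≥0∞).toReal),
    Summable.tsum_prod' (summable_coord φ hφ ζ) (fun q => (summable_coord φ hφ ζ).prod_factor q)]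
  exact tsum_congr fun q => (slice_norm_hasSum φ hφ ζ q).tsum_eq

lemma slice_repAlg (φ : L →* K) (hφ : Function.Injective φ)
    (f : MonoidAlgebra ℂ L) (η : lp (fun _ : K => ℂ) 2) (q : Quotient (cosetSetoid φ)) :
    slice φ hφ (repAlg (regularRep K) (MonoidAlgebra.mapDomain φ f) η) q
      = repAlg (regularRep L) f (slice φ hφ η q) := by
  apply lp.ext
  funext m
  have h1 : (slice φ hφ (repAlg (regularRep K) (MonoidAlgebra.mapDomain φ f) η) q : ∀ _ : L, ℂ) m
      = (repAlg (regularRep K) (MonoidAlgebra.mapDomain φ f) η : ∀ _ : K, ℂ)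
          (cosetEquiv φ hφ (q, m)) := rfl
  rw [h1, repAlg_apply_coord, repAlg_apply_coord, MonoidAlgebra.mapDomain,
    MonoidAlgebra.coeff_ofCoeff, Finsupp.sum_mapDomain_index
      (h := fun (g : K) (c : ℂ) => c * (η (g⁻¹ * (cosetEquiv φ hφ (q, m)))))
      (fun _ => zero_mul _) (fun _ _ _ => add_mul _ _ _)]
  refine Finsupp.sum_congr fun l _ => ?_
  congr 1
  show η ((φ l)⁻¹ * (φ m * Quotient.out q)) = (slice φ hφ η q : ∀ _ : L, ℂ) (l⁻¹ * m)
  have h2 : (slice φ hφ η q : ∀ _ : L, ℂ) (l⁻¹ * m) = η (φ (l⁻¹ * m) * Quotient.out q) := rfl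
  rw [h2, map_mul, map_inv, mul_assoc]

lemma rpow_two_cancel {x y : ℝ} (hx : 0 ≤ x) (hy : 0 ≤ y)
    (h : x ^ (2 : ℝ≥0∞).toReal = y ^ (2 : ℝ≥0∞).toReal) : x = y := by
  have ht : (0 : ℝ) < (2 : ℝ≥0∞).toReal := by norm_num
  exact le_antisymm ((Real.rpow_le_rpow_iff hx hy ht).1 h.le)
    ((Real.rpow_le_rpow_iff hy hx ht).1 h.ge)

lemma norm_repAlg_mapDomain (φ : L →* K) (hφ : Function.Injective φ)
    (f : MonoidAlgebra ℂ L) :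
    ‖repAlg (regularRep K) (MonoidAlgebra.mapDomain φ f)‖ = ‖repAlg (regularRep L) f‖ := by
  set T := repAlg (regularRep K) (MonoidAlgebra.mapDomain φ f) with hT
  set S := repAlg (regularRep L) f with hS
  have ht : (0 : ℝ) < (2 : ℝ≥0∞).toReal := by norm_num
  apply le_antisymm
  · apply ContinuousLinearMap.opNorm_le_bound _ (norm_nonneg S)
    intro η
    rw [← Real.rpow_le_rpow_iff (norm_nonneg _)
      (mul_nonneg (norm_nonneg S) (norm_nonneg η)) ht]
    have hsum1 : Summable fun q => ‖S (slice φ hφ η q)‖ ^ (2 : ℝ≥0∞).toReal :=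
      (summable_slice_norm φ hφ (T η)).congr fun q => by
        rw [hT, slice_repAlg φ hφ f η q]
    have hsum2 : Summable fun q =>
        (‖S‖ * ‖slice φ hφ η q‖) ^ (2 : ℝ≥0∞).toReal :=
      ((summable_slice_norm φ hφ η).mul_left (‖S‖ ^ (2 : ℝ≥0∞).toReal)).congr
        fun q => (Real.mul_rpow (norm_nonneg _) (norm_nonneg _)).symm
    calc ‖T η‖ ^ (2 : ℝ≥0∞).toReal
        = ∑' q, ‖slice φ hφ (T η) q‖ ^ (2 : ℝ≥0∞).toReal := norm_decomp φ hφ _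
      _ = ∑' q, ‖S (slice φ hφ η q)‖ ^ (2 : ℝ≥0∞).toReal := by
          exact tsum_congr fun q => by rw [hT, slice_repAlg φ hφ f η q]
      _ ≤ ∑' q, (‖S‖ * ‖slice φ hφ η q‖) ^ (2 : ℝ≥0∞).toReal := by
          refine Summable.tsum_le_tsum (fun q => ?_) hsum1 hsum2
          exact Real.rpow_le_rpow (norm_nonneg _) (S.le_opNorm _) ht.le
      _ = ‖S‖ ^ (2 : ℝ≥0∞).toReal * ∑' q, ‖slice φ hφ η q‖ ^ (2 : ℝ≥0∞).toReal := by
          rw [← tsum_mul_left]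
          exact tsum_congr fun q => Real.mul_rpow (norm_nonneg _) (norm_nonneg _)
      _ = ‖S‖ ^ (2 : ℝ≥0∞).toReal * ‖η‖ ^ (2 : ℝ≥0∞).toReal := by
          rw [norm_decomp φ hφ η]
      _ = (‖S‖ * ‖η‖) ^ (2 : ℝ≥0∞).toReal :=
          (Real.mul_rpow (norm_nonneg _) (norm_nonneg _)).symm
  · apply ContinuousLinearMap.opNorm_le_bound _ (norm_nonneg T)
    intro ξ
    set e := cosetEquiv φ hφ with he
    set q0 : Quotient (cosetSetoid φ) := ⟦(1 : K)⟧ with hq0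
    have hmem : Memℓp (fun x : K =>
        if (e.symm x).1 = q0 then ξ (e.symm x).2 else 0) 2 := by
      apply memℓp_gen
      apply (e.summable_iff (f := fun x : K =>
        ‖if (e.symm x).1 = q0 then ξ (e.symm x).2 else (0 : ℂ)‖ ^ (2 : ℝ≥0∞).toReal)).1
      have hinj : Function.Injective fun l : L => ((q0, l) :
          Quotient (cosetSetoid φ) × L) := fun a b h => (Prod.ext_iff.1 h).2
      apply (Function.Injective.summable_iff hinj ?_).1
      · refine ((lp.memℓp ξ).summable (by norm_num)).congr fun l => ?_
        simp
      · intro p hp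
        have : p.1 ≠ q0 := by
          rintro h
          exact hp ⟨p.2, by rw [← h]⟩
        simp [this]
    set η : lp (fun _ : K => ℂ) 2 := ⟨_, hmem⟩ with hη
    have hslice : ∀ q, slice φ hφ η q = if q = q0 then ξ else 0 := by
      intro q
      apply lp.ext
      funext l
      have : (slice φ hφ η q : ∀ _ : L, ℂ) l
          = if (e.symm (e (q, l))).1 = q0 then ξ (e.symm (e (q, l))).2 else 0 := rfl
      rw [this, Equiv.symm_apply_apply]
      by_cases h : q = q0 <;> simp [h, lp.coeFn_zero]
    have hnorm : ∀ ζ : lp (fun _ : K => ℂ) 2,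
        (∀ q, q ≠ q0 → slice φ hφ ζ q = 0) →
        ‖ζ‖ = ‖slice φ hφ ζ q0‖ := by
      intro ζ h0
      refine rpow_two_cancel (norm_nonneg _) (norm_nonneg _) ?_
      rw [norm_decomp φ hφ ζ]
      refine tsum_eq_single q0 fun q hq => ?_
      rw [h0 q hq, norm_zero, Real.zero_rpow (by norm_num)]
    have hη_norm : ‖η‖ = ‖ξ‖ := by
      rw [hnorm η fun q hq => by rw [hslice q, if_neg hq]]
      rw [hslice q0, if_pos rfl]
    have hTη : ‖T η‖ = ‖S ξ‖ := by
      rw [hnorm (T η) fun q hq => ?_]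
      · rw [hT, slice_repAlg φ hφ f η q0, hslice q0, if_pos rfl, hS]
      · rw [hT, slice_repAlg φ hφ f η q, hslice q, if_neg hq, map_zero]
    calc ‖S ξ‖ = ‖T η‖ := hTη.symm
      _ ≤ ‖T‖ * ‖η‖ := T.le_opNorm η
      _ = ‖T‖ * ‖ξ‖ := by rw [hη_norm]

lemma repAlg_mapDomain {E : Type*} [NormedAddCommGroup E] [NormedSpace ℂ E]
    (π : K →* (E →L[ℂ] E)) (φ : L →* K) (f : MonoidAlgebra ℂ L) :
    repAlg π (MonoidAlgebra.mapDomain φ f) = repAlg (π.comp φ) f := by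
  rw [repAlg, repAlg, MonoidAlgebra.lift_apply, MonoidAlgebra.lift_apply,
    MonoidAlgebra.mapDomain, MonoidAlgebra.coeff_ofCoeff]
  exact Finsupp.sum_mapDomain_index (fun _ => zero_smul ℂ _) (fun _ _ _ => add_smul _ _ _)

lemma bridge {K K' L' : Type*} [Group K] [Group K'] [Group L']
    (φ : L' →* K) (φ' : L' →* K')
    (hφ : Function.Injective φ) (hφ' : Function.Injective φ')
    (hA : IsAmenable K') (fL : MonoidAlgebra ℂ L') :
    ‖repAlg (trivialRep K) (MonoidAlgebra.mapDomain φ fL)‖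
      ≤ ‖repAlg (regularRep K) (MonoidAlgebra.mapDomain φ fL)‖ := by
  have h1 : repAlg (trivialRep K) (MonoidAlgebra.mapDomain φ fL)
      = repAlg (trivialRep K') (MonoidAlgebra.mapDomain φ' fL) := by
    rw [repAlg_mapDomain, repAlg_mapDomain]
    have hc : (trivialRep K).comp φ = (trivialRep K').comp φ' := by
      ext x
      rfl
    rw [hc]
  rw [h1, norm_repAlg_mapDomain φ hφ fL]
  calc ‖repAlg (trivialRep K') (MonoidAlgebra.mapDomain φ' fL)‖
      ≤ ‖repAlg (regularRep K') (MonoidAlgebra.mapDomain φ' fL)‖ := hA _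
    _ = ‖repAlg (regularRep L') fL‖ := norm_repAlg_mapDomain φ' hφ' fL

lemma isAmenable_of_mulEquiv {K K' : Type*} [Group K] [Group K']
    (e : K ≃* K') (h : IsAmenable K) : IsAmenable K' := by
  intro f
  have hmap : MonoidAlgebra.mapDomain e.toMonoidHom
      (MonoidAlgebra.mapDomain e.symm.toMonoidHom f) = f := by
    apply MonoidAlgebra.ext
    simp only [MonoidAlgebra.mapDomain, MonoidAlgebra.coeff_ofCoeff]
    rw [← Finsupp.mapDomain_comp]
    have : (e.toMonoidHom : K → K') ∘ (e.symm.toMonoidHom : K' → K) = id := by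
      funext x
      exact e.apply_symm_apply x
    rw [this, Finsupp.mapDomain_id]
  rw [← hmap]
  exact bridge e.toMonoidHom (MonoidHom.id K) e.injective (fun _ _ hx => hx) h _

end Aux

section SubgroupAux

variable {G : Type*} [Group G]

lemma mem_conjSubgroup {g x : G} {H : Subgroup G} :
    x ∈ conjSubgroup g H ↔ g⁻¹ * x * g ∈ H := by
  constructor
  · rintro ⟨h, hh, rfl⟩
    simpa [MulAut.conj_apply, mul_assoc] using hh
  · intro h
    exact ⟨g⁻¹ * x * g, h, by simp [MulAut.conj_apply, mul_assoc]⟩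

lemma conjSubgroup_conjSubgroup (a b : G) (H : Subgroup G) :
    conjSubgroup a (conjSubgroup b H) = conjSubgroup (a * b) H := by
  ext x
  rw [mem_conjSubgroup, mem_conjSubgroup, mem_conjSubgroup]
  have hx : b⁻¹ * (a⁻¹ * x * a) * b = (a * b)⁻¹ * x * (a * b) := by group
  rw [hx]

lemma conjSubgroup_inf (g : G) (A B : Subgroup G) :
    conjSubgroup g (A ⊓ B) = conjSubgroup g A ⊓ conjSubgroup g B := by
  ext x
  simp [mem_conjSubgroup, Subgroup.mem_inf]

/-- The key transfer: if the support of `f` lies in an amenable subgroup `K'`,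
then the amenability inequality holds for `f` in `K`. -/
lemma amenable_of_agree (K K' : Subgroup G) (hA : IsAmenable ↥K')
    (f : MonoidAlgebra ℂ ↥K) (hS : ∀ s ∈ f.coeff.support, (s : G) ∈ K') :
    ‖repAlg (trivialRep ↥K) f‖ ≤ ‖repAlg (regularRep ↥K) f‖ := by
  set S : Set G := ↑(f.coeff.support.image ((↑) : ↥K → G)) with hSdef
  set L : Subgroup G := Subgroup.closure S with hL
  have hSsub : ∀ x ∈ S, ∃ s ∈ f.coeff.support, (s : G) = x := by
    intro x hx
    simpa [hSdef] using hx
  have hLK : L ≤ K := (Subgroup.closure_le _).2 (by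
    intro x hx
    obtain ⟨s, _, rfl⟩ := hSsub x hx
    exact s.2)
  have hLK' : L ≤ K' := (Subgroup.closure_le _).2 (by
    intro x hx
    obtain ⟨s, hs, rfl⟩ := hSsub x hx
    exact hS s hs)
  set φ : ↥L →* ↥K := Subgroup.inclusion hLK with hφdef
  set φ' : ↥L →* ↥K' := Subgroup.inclusion hLK' with hφ'def
  have hφ : Function.Injective φ := Subgroup.inclusion_injective hLK
  have hφ' : Function.Injective φ' := Subgroup.inclusion_injective hLK'
  have hsupp : ↑f.coeff.support ⊆ Set.range φ := by
    intro s hs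
    have hsL : (s : G) ∈ L := Subgroup.subset_closure (by
      simp only [hSdef, Finset.coe_image, Set.mem_image, Finset.mem_coe]
      exact ⟨s, hs, rfl⟩)
    exact ⟨⟨(s : G), hsL⟩, by apply Subtype.ext; rfl⟩
  have hmap : MonoidAlgebra.mapDomain φ (MonoidAlgebra.comapDomain φ hφ f) = f :=
    MonoidAlgebra.mapDomain_comapDomain hsupp hφ
  rw [← hmap]
  exact bridge φ φ' hφ hφ' hA _

lemma cylinder_mem_nhds (H : Subgroup G) (F : Finset G) :
    {H' : Subgroup G | ∀ x ∈ F, (x ∈ H' ↔ x ∈ H)} ∈ @nhds _ (chabautyTopology G) H := by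
  letI := chabautyTopology G
  have hn : @nhds _ (chabautyTopology G) H
      = Filter.comap (chabautyEmbed G) (nhds (chabautyEmbed G H)) :=
    nhds_induced (chabautyEmbed G) H
  rw [hn]
  refine Filter.mem_comap.2 ⟨{b : G → Bool | ∀ x ∈ F, b x = chabautyEmbed G H x}, ?_, ?_⟩
  · have heq : {b : G → Bool | ∀ x ∈ F, b x = chabautyEmbed G H x}
        = ⋂ x ∈ F, {b : G → Bool | b x = chabautyEmbed G H x} := by
      ext b; simp
    rw [heq]
    refine (Filter.biInter_finset_mem F).2 fun x _ => ?_
    have h2 : {b : G → Bool | b x = chabautyEmbed G H x}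
        = (fun b : G → Bool => b x) ⁻¹' {chabautyEmbed G H x} := rfl
    rw [h2]
    exact IsOpen.mem_nhds
      (IsOpen.preimage (continuous_apply x)
        (isOpen_discrete ({chabautyEmbed G H x} : Set Bool))) rfl
  · intro b hb
    intro x hx
    have := hb x hx
    simpa [chabautyEmbed, decide_eq_decide] using this

end SubgroupAux

set_option maxHeartbeats 1000000 in
/-- The set of a-normal subgroups of a countable group `G` is a closed,
conjugation-invariant subset of `Sub(G)` for the Chabauty topology. -/
theorem anormal_subgroups_closed_and_invariant (G : Type*) [Group G] [Countable G] :
    IsClosed[chabautyTopology G]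
      {H : Subgroup G | ∀ g : G, g ∉ H → IsAmenable ↥(conjSubgroup g H ⊓ H)} ∧
    ∀ (g : G) (H : Subgroup G),
      (∀ x : G, x ∉ H → IsAmenable ↥(conjSubgroup x H ⊓ H)) →
      (∀ x : G, x ∉ conjSubgroup g H →
        IsAmenable ↥(conjSubgroup x (conjSubgroup g H) ⊓ conjSubgroup g H)) := by
  constructor
  · -- closedness
    letI := chabautyTopology G
    rw [← isOpen_compl_iff, isOpen_iff_mem_nhds]
    intro H hH
    simp only [Set.mem_compl_iff, Set.mem_setOf_eq, not_forall] at hH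
    obtain ⟨g, hg, hna⟩ := hH
    simp only [IsAmenable, WeaklyContained, not_forall, not_le] at hna
    obtain ⟨f, hf⟩ := hna
    set F : Finset G := insert g
      ((Finset.image (fun s : ↥(conjSubgroup g H ⊓ H) => (s : G)) f.coeff.support)
      ∪ (Finset.image (fun s : ↥(conjSubgroup g H ⊓ H) => g⁻¹ * (s : G) * g) f.coeff.support))
      with hF
    refine Filter.mem_of_superset (cylinder_mem_nhds H F) ?_
    intro H' hH'
    rw [Set.mem_compl_iff, Set.mem_setOf_eq]
    intro hmem
    have hgF : g ∈ F := Finset.mem_insert_self _ _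
    have hg' : g ∉ H' := fun h => hg ((hH' g hgF).1 h)
    have hA := hmem g hg'
    have hS : ∀ s ∈ f.coeff.support, (s : G) ∈ conjSubgroup g H' ⊓ H' := by
      intro s hs
      have hsK : (s : G) ∈ conjSubgroup g H ⊓ H := s.2
      have hsH : (s : G) ∈ H := (Subgroup.mem_inf.1 hsK).2
      have hsC : g⁻¹ * (s : G) * g ∈ H := mem_conjSubgroup.1 (Subgroup.mem_inf.1 hsK).1
      have h1F : (s : G) ∈ F := by
        refine Finset.mem_insert_of_mem (Finset.mem_union_left _ ?_)
        exact Finset.mem_image_of_mem (fun s : ↥(conjSubgroup g H ⊓ H) => (s : G)) hs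
      have h2F : g⁻¹ * (s : G) * g ∈ F := by
        refine Finset.mem_insert_of_mem (Finset.mem_union_right _ ?_)
        exact Finset.mem_image_of_mem
          (fun s : ↥(conjSubgroup g H ⊓ H) => g⁻¹ * (s : G) * g) hs
      exact Subgroup.mem_inf.2 ⟨mem_conjSubgroup.2 ((hH' _ h2F).2 hsC), (hH' _ h1F).2 hsH⟩
    have hle := amenable_of_agree (conjSubgroup g H ⊓ H) (conjSubgroup g H' ⊓ H') hA f hS
    exact absurd hle (not_le.2 hf)
  · -- conjugation invariance
    intro g H hH x hx
    have hx' : g⁻¹ * x * g ∉ H := fun h => hx (mem_conjSubgroup.2 h)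
    have hA := hH (g⁻¹ * x * g) hx'
    have heq : conjSubgroup x (conjSubgroup g H) ⊓ conjSubgroup g H
        = conjSubgroup g (conjSubgroup (g⁻¹ * x * g) H ⊓ H) := by
      rw [conjSubgroup_inf, conjSubgroup_conjSubgroup, conjSubgroup_conjSubgroup]
      congr 2
      group
    rw [heq]
    exact isAmenable_of_mulEquiv
      (Subgroup.equivMapOfInjective _ _ (fun a b hab => (MulAut.conj g).injective hab)) hA

end QR
end
end
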